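/- Let x₁, …, x_m be unit vectors in ℝⁿ. Then for every positive integer k, (1/m²) ∑_{i=1}^{m} ∑_{j=1}^{m} |⟨x_i, x_j⟩|^{2k} ≥ (1·3·5⋯(2k−1)) / (n·(n+2)⋯(n+2k−2)) = ∏_{j=1}^{k} (2j−1)/(n+2j−2). -/

import Mathlib

open scoped RealInnerProductSpace

open Finset

namespace RealWelch

/-- `w c = (c-1)!!` for even `c`, `0` for odd `c`. -/
def w : ℕ → ℕ
  | 0 => 1
  | 1 => 0
  | (c+2) => (c+1) * w c

lemma w_succ (c : ℕ) : w (c + 1) = c * w (c - 1) := by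
  cases c with
  | zero => rfl
  | succ c => rfl

def v : ℕ → ℕ
  | 0 => 1
  | (k+1) => (2*k+1) * v k

lemma v_pos : ∀ k, 0 < v k
  | 0 => Nat.one_pos
  | (k+1) => Nat.mul_pos (by omega) (v_pos k)

lemma v_eq (k : ℕ) : v k = ∏ j ∈ Finset.range k, (2*j+1) := by
  induction k with
  | zero => rfl
  | succ k ih => rw [Finset.prod_range_succ, ← ih, v, mul_comm]

def cnt {n L : ℕ} (i : Fin n) (f : Fin L → Fin n) : ℕ := ∑ t, if f t = i then 1 else 0

def MM {n L : ℕ} (f : Fin L → Fin n) : ℕ := ∏ i, w (cnt i f)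

lemma cnt_insertNth {n L : ℕ} (p : Fin (L+1)) (a : Fin n) (h : Fin L → Fin n) (i : Fin n) :
    cnt i (p.insertNth a h) = (if a = i then 1 else 0) + cnt i h := by
  unfold cnt
  rw [Fin.sum_univ_succAbove _ p]
  simp

lemma cnt_total {n L : ℕ} (f : Fin L → Fin n) : ∑ i, cnt i f = L := by
  unfold cnt
  rw [Finset.sum_comm]
  simp

lemma sum_insertNth {M : Type*} [AddCommMonoid M] {n L : ℕ} (p : Fin (L+1))
    (F : (Fin (L+1) → Fin n) → M) :
    ∑ f : Fin (L+1) → Fin n, F f = ∑ a : Fin n, ∑ g : Fin L → Fin n, F (p.insertNth a g) := by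
  rw [← (Fin.insertNthEquiv (fun _ => Fin n) p).sum_comp F, Fintype.sum_prod_type]
  rfl

lemma prod_insertNth {n L : ℕ} (p : Fin (L+1)) (a : Fin n) (g : Fin L → Fin n) (x : Fin n → ℝ) :
    ∏ t : Fin (L+1), x (Fin.insertNth (α := fun _ => Fin n) p a g t) = x a * ∏ t, x (g t) := by
  rw [Fin.prod_univ_succAbove _ p]
  simp


lemma cnt_removeNth {n L : ℕ} (s : Fin (L+1)) (g : Fin (L+1) → Fin n) (i : Fin n) :
    cnt i g = (if g s = i then 1 else 0) + cnt i (s.removeNth g) := by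
  conv_lhs => rw [← Fin.insertNth_self_removeNth s g]
  rw [cnt_insertNth]

lemma MM_insertNth_zero {n L : ℕ} (a : Fin n) (g : Fin (L+1) → Fin n) :
    MM (Fin.insertNth (α := fun _ => Fin n) 0 a g)
      = ∑ s : Fin (L+1), if g s = a then MM (s.removeNth g) else 0 := by
  have lhs_eq : MM (Fin.insertNth (α := fun _ => Fin n) 0 a g)
      = w (cnt a g + 1) * ∏ i ∈ Finset.univ.erase a, w (cnt i g) := by
    unfold MM
    rw [← Finset.mul_prod_erase Finset.univ _ (Finset.mem_univ a)]
    congr 1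
    · rw [cnt_insertNth]; simp [Nat.add_comm]
    · refine Finset.prod_congr rfl fun i hi => ?_
      rw [cnt_insertNth]
      have : a ≠ i := (Finset.ne_of_mem_erase hi).symm
      simp [this]
  have rhs_eq : (∑ s : Fin (L+1), if g s = a then MM (s.removeNth g) else 0)
      = cnt a g * (w (cnt a g - 1) * ∏ i ∈ Finset.univ.erase a, w (cnt i g)) := by
    have hP : ∀ s : Fin (L+1), (if g s = a then MM (s.removeNth g) else 0)
        = (if g s = a then 1 else 0) * (w (cnt a g - 1) * ∏ i ∈ Finset.univ.erase a, w (cnt i g)) := by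
      intro s
      by_cases hs : g s = a
      · have key : ∀ i, cnt i (s.removeNth g) = cnt i g - (if a = i then 1 else 0) := by
          intro i
          have h1 := cnt_removeNth s g i
          rw [hs] at h1
          by_cases hia : a = i <;> simp [hia] at h1 ⊢ <;> omega
        simp only [hs, if_true, one_mul]
        unfold MM
        rw [← Finset.mul_prod_erase Finset.univ _ (Finset.mem_univ a)]
        congr 1
        · rw [key a]; simp
        · refine Finset.prod_congr rfl fun i hi => ?_
          rw [key i]
          have : a ≠ i := (Finset.ne_of_mem_erase hi).symm
          simp [this]
      · simp [hs]
    rw [Finset.sum_congr rfl fun s _ => hP s, ← Finset.sum_mul]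
    congr 1
  rw [lhs_eq, rhs_eq, w_succ, Nat.mul_assoc]

lemma MM_double {n L : ℕ} (s : Fin (L+1)) (a : Fin n) (h : Fin L → Fin n) :
    MM (Fin.insertNth (α := fun _ => Fin n) 0 a (Fin.insertNth (α := fun _ => Fin n) s a h))
      = (cnt a h + 1) * MM h := by
  have key : ∀ i, cnt i (Fin.insertNth (α := fun _ => Fin n) 0 a
      (Fin.insertNth (α := fun _ => Fin n) s a h))
      = cnt i h + (if a = i then 2 else 0) := by
    intro i
    rw [cnt_insertNth, cnt_insertNth]
    by_cases hia : a = i <;> simp [hia] <;> omega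
  unfold MM
  rw [Finset.prod_congr rfl fun i _ => congrArg w (key i)]
  rw [← Finset.mul_prod_erase Finset.univ _ (Finset.mem_univ a),
      ← Finset.mul_prod_erase Finset.univ (fun i => w (cnt i h)) (Finset.mem_univ a)]
  have h1 : ∀ i ∈ Finset.univ.erase a, w (cnt i h + if a = i then 2 else 0) = w (cnt i h) := by
    intro i hi
    have : a ≠ i := (Finset.ne_of_mem_erase hi).symm
    simp [this]
  rw [Finset.prod_congr rfl h1]
  have h2 : w (cnt a h + if a = a then 2 else 0) = (cnt a h + 1) * w (cnt a h) := by
    rw [if_pos rfl]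
    rfl
  rw [h2]
  ring


lemma claimA {n : ℕ} (x : Fin n → ℝ) (k : ℕ) :
    ∑ f : Fin (2*k) → Fin n, (MM f : ℝ) * ∏ t, x (f t)
      = (v k : ℝ) * (∑ i, x i ^ 2) ^ k := by
  induction k with
  | zero => simp [MM, cnt, w, v]
  | succ k IH =>
    show ∑ f : Fin (2*k+1+1) → Fin n, (MM f : ℝ) * ∏ t, x (f t) = _
    rw [sum_insertNth (0 : Fin (2*k+1+1)) (fun f => (MM f : ℝ) * ∏ t, x (f t))]
    have step1 : ∀ (a : Fin n) (g : Fin (2*k+1) → Fin n),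
        (MM (Fin.insertNth (α := fun _ => Fin n) 0 a g) : ℝ)
          * ∏ t, x (Fin.insertNth (α := fun _ => Fin n) 0 a g t)
        = ∑ s : Fin (2*k+1), (if g s = a then (MM (s.removeNth g) : ℝ) else 0)
            * (x a * ∏ t, x (g t)) := by
      intro a g
      rw [MM_insertNth_zero, prod_insertNth, ← Finset.sum_mul, Nat.cast_sum]
      congr 1
      refine Finset.sum_congr rfl fun s _ => ?_
      split <;> simp
    rw [Finset.sum_congr rfl fun a _ => Finset.sum_congr rfl fun g _ => step1 a g]
    have step2 : ∀ (a : Fin n) (s : Fin (2*k+1)),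
        ∑ g : Fin (2*k+1) → Fin n,
          (if g s = a then (MM (s.removeNth g) : ℝ) else 0) * (x a * ∏ t, x (g t))
        = ∑ h : Fin (2*k) → Fin n, (MM h : ℝ) * (x a * (x a * ∏ t, x (h t))) := by
      intro a s
      rw [sum_insertNth s (fun g =>
        (if g s = a then (MM (s.removeNth g) : ℝ) else 0) * (x a * ∏ t, x (g t)))]
      simp only [Fin.insertNth_apply_same, Fin.removeNth_insertNth, prod_insertNth,
        ite_mul, zero_mul]
      rw [Finset.sum_comm]
      refine Finset.sum_congr rfl fun h _ => ?_
      rw [Finset.sum_ite_eq' Finset.univ a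
        (fun b => (MM h : ℝ) * (x a * (x b * ∏ t, x (h t))))]
      simp
    rw [Finset.sum_congr rfl fun a _ => Finset.sum_comm.trans
      (Finset.sum_congr rfl fun s _ => step2 a s)]
    have step3 : ∀ a : Fin n,
        ∑ _s : Fin (2*k+1), ∑ h : Fin (2*k) → Fin n,
          (MM h : ℝ) * (x a * (x a * ∏ t, x (h t)))
        = x a ^ 2 * ((2*k+1 : ℝ) * ((v k : ℝ) * (∑ i, x i ^ 2) ^ k)) := by
      intro a
      have e : ∑ h : Fin (2*k) → Fin n, (MM h : ℝ) * (x a * (x a * ∏ t, x (h t)))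
          = x a ^ 2 * ((v k : ℝ) * (∑ i, x i ^ 2) ^ k) := by
        rw [← IH, Finset.mul_sum]
        exact Finset.sum_congr rfl fun h _ => by ring
      rw [Finset.sum_congr rfl fun s _ => e, Finset.sum_const, card_univ, Fintype.card_fin,
        nsmul_eq_mul]
      push_cast
      ring
    rw [Finset.sum_congr rfl fun a _ => step3 a, ← Finset.sum_mul]
    rw [show v (k+1) = (2*k+1) * v k from rfl]
    push_cast
    ring

lemma claimB {n : ℕ} (k : ℕ) :
    ∑ f : Fin (2*k) → Fin n, (MM f) ^ 2 = v k * ∏ j ∈ Finset.range k, (n + 2*j) := by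
  induction k with
  | zero => simp [MM, cnt, w, v]
  | succ k IH =>
    show ∑ f : Fin (2*k+1+1) → Fin n, (MM f) ^ 2 = _
    rw [sum_insertNth (0 : Fin (2*k+1+1)) (fun f => (MM f) ^ 2)]
    have step1 : ∀ (a : Fin n) (g : Fin (2*k+1) → Fin n),
        (MM (Fin.insertNth (α := fun _ => Fin n) 0 a g)) ^ 2
        = ∑ s : Fin (2*k+1), if g s = a then
            MM (s.removeNth g) * MM (Fin.insertNth (α := fun _ => Fin n) 0 a g) else 0 := by
      intro a g
      rw [pow_two]
      conv_lhs => rw [MM_insertNth_zero]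
      rw [Finset.sum_mul]
      simp only [ite_mul, zero_mul]
      rw [← MM_insertNth_zero]
    rw [Finset.sum_congr rfl fun a _ => Finset.sum_congr rfl fun g _ => step1 a g]
    have step2 : ∀ (a : Fin n) (s : Fin (2*k+1)),
        ∑ g : Fin (2*k+1) → Fin n, (if g s = a then
            MM (s.removeNth g) * MM (Fin.insertNth (α := fun _ => Fin n) 0 a g) else 0)
        = ∑ h : Fin (2*k) → Fin n, (cnt a h + 1) * MM h ^ 2 := by
      intro a s
      rw [sum_insertNth s (fun g => if g s = a then
            MM (s.removeNth g) * MM (Fin.insertNth (α := fun _ => Fin n) 0 a g) else 0)]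
      simp only [Fin.insertNth_apply_same, Fin.removeNth_insertNth]
      rw [Finset.sum_comm]
      refine Finset.sum_congr rfl fun h _ => ?_
      rw [Finset.sum_ite_eq' Finset.univ a (fun b =>
        MM h * MM (Fin.insertNth (α := fun _ => Fin n) 0 a
          (Fin.insertNth (α := fun _ => Fin n) s b h)))]
      simp only [Finset.mem_univ, if_true]
      rw [MM_double]
      ring
    rw [Finset.sum_congr rfl fun a _ => Finset.sum_comm.trans
      (Finset.sum_congr rfl fun s _ => step2 a s)]
    have inner : ∀ h : Fin (2*k) → Fin n,
        ∑ a : Fin n, (cnt a h + 1) * MM h ^ 2 = (n + 2*k) * MM h ^ 2 := by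
      intro h
      rw [← Finset.sum_mul]
      congr 1
      rw [Finset.sum_add_distrib, cnt_total]
      simp [card_univ]
      omega
    rw [Finset.sum_comm]
    rw [Finset.sum_congr rfl fun s _ =>
      Finset.sum_comm.trans (Finset.sum_congr rfl fun h _ => inner h)]
    simp only [← Finset.mul_sum, Finset.sum_const, card_univ, Fintype.card_fin, smul_eq_mul]
    rw [IH, show v (k+1) = (2*k+1) * v k from rfl, Finset.prod_range_succ]
    ring

lemma gram_pow {n L : ℕ} (c : Fin n → ℝ) :
    ∑ f : Fin L → Fin n, ∏ t, c (f t) = (∑ i, c i) ^ L := by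
  induction L with
  | zero => simp
  | succ L IH =>
    rw [sum_insertNth (0 : Fin (L+1)) (fun f => ∏ t, c (f t))]
    simp only [prod_insertNth]
    simp only [← Finset.mul_sum]
    rw [← Finset.sum_mul, IH, pow_succ]
    ring

end RealWelch

/-- The improved (real) Welch average cross-correlation bound for unit vectors in `ℝⁿ`. -/
theorem real_welch_average_bound (n m : ℕ) (hm : 0 < m)
    (x : Fin m → EuclideanSpace ℝ (Fin n)) (hx : ∀ i, ‖x i‖ = 1)
    (k : ℕ) (hk : 0 < k) :
    (1 / (m : ℝ) ^ 2) * ∑ i : Fin m, ∑ j : Fin m, |⟪x i, x j⟫| ^ (2 * k)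
      ≥ ∏ j ∈ Finset.range k, (2 * (j : ℝ) + 1) / ((n : ℝ) + 2 * j) := by
  classical
  open Finset RealWelch in
  rcases Nat.eq_zero_or_pos n with hn | hn
  · exfalso
    subst hn
    have h := hx ⟨0, hm⟩
    have h0 : x ⟨0, hm⟩ = 0 := Subsingleton.elim _ _
    rw [h0, norm_zero] at h
    norm_num at h
  · have hinner : ∀ i j, (⟪x i, x j⟫ : ℝ) = ∑ l, x i l * x j l := by
      intro i j
      simp [PiLp.inner_apply, RCLike.inner_apply, starRingEnd_apply, star_trivial]
      exact Finset.sum_congr rfl fun _ _ => mul_comm _ _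
    have hunit : ∀ i, ∑ l, (x i l) ^ 2 = 1 := by
      intro i
      have h1 : (⟪x i, x i⟫ : ℝ) = 1 := by
        rw [real_inner_self_eq_norm_sq, hx i]; norm_num
      rw [hinner] at h1
      calc ∑ l, (x i l)^2 = ∑ l, x i l * x i l := by
            exact Finset.sum_congr rfl fun l _ => sq (x i l) ▸ by ring
        _ = 1 := h1
    set S := ∑ i : Fin m, ∑ j : Fin m, |⟪x i, x j⟫| ^ (2 * k) with hS
    set D := ∏ j ∈ Finset.range k, ((n : ℝ) + 2 * j) with hD
    have e1 : ∑ f : Fin (2*k) → Fin n, (∑ i : Fin m, ∏ t, x i (f t)) * (RealWelch.MM f : ℝ)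
        = (m : ℝ) * (RealWelch.v k : ℝ) := by
      simp only [Finset.sum_mul]
      rw [Finset.sum_comm]
      have key : ∀ i : Fin m, ∑ f : Fin (2*k) → Fin n, (∏ t, x i (f t)) * (RealWelch.MM f : ℝ)
          = (RealWelch.v k : ℝ) := by
        intro i
        have hA := RealWelch.claimA (fun l => x i l) k
        simp only [hunit i, one_pow, mul_one] at hA
        rw [← hA]
        exact Finset.sum_congr rfl fun f _ => by ring
      rw [Finset.sum_congr rfl fun i _ => key i, Finset.sum_const, Finset.card_univ,
        Fintype.card_fin, nsmul_eq_mul]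
    have e2 : ∑ f : Fin (2*k) → Fin n, (∑ i : Fin m, ∏ t, x i (f t)) ^ 2 = S := by
      simp only [pow_two, Finset.sum_mul_sum]
      rw [Finset.sum_comm]
      rw [Finset.sum_congr rfl fun i _ => Finset.sum_comm]
      rw [hS]
      refine Finset.sum_congr rfl fun i _ => Finset.sum_congr rfl fun j _ => ?_
      calc ∑ f : Fin (2*k) → Fin n, (∏ t, x i (f t)) * (∏ t, x j (f t))
          = ∑ f : Fin (2*k) → Fin n, ∏ t, (x i (f t) * x j (f t)) := by
            exact Finset.sum_congr rfl fun f _ => (Finset.prod_mul_distrib).symm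
        _ = (∑ l, x i l * x j l) ^ (2*k) :=
            RealWelch.gram_pow (n := n) (L := 2*k) (fun l => x i l * x j l)
        _ = |⟪x i, x j⟫| ^ (2*k) := by
            rw [← hinner i j, pow_mul, pow_mul, sq_abs]
    have e3 : ∑ f : Fin (2*k) → Fin n, ((RealWelch.MM f : ℝ)) ^ 2
        = (RealWelch.v k : ℝ) * D := by
      have hB := RealWelch.claimB (n := n) k
      calc ∑ f : Fin (2*k) → Fin n, ((RealWelch.MM f : ℝ)) ^ 2
          = ((∑ f : Fin (2*k) → Fin n, (RealWelch.MM f) ^ 2 : ℕ) : ℝ) := by push_cast; rfl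
        _ = (RealWelch.v k : ℝ) * D := by rw [hB, hD]; push_cast; ring
    have CS := Finset.sum_mul_sq_le_sq_mul_sq Finset.univ
      (fun f : Fin (2*k) → Fin n => ∑ i : Fin m, ∏ t, x i (f t))
      (fun f => (RealWelch.MM f : ℝ))
    have CS' : ((m : ℝ) * (RealWelch.v k : ℝ))^2 ≤ S * ((RealWelch.v k : ℝ) * D) := by
      rw [← e1, ← e2, ← e3]
      exact CS
    have hDpos : (0:ℝ) < D := by
      rw [hD]
      refine Finset.prod_pos fun j _ => ?_
      have h1 : (0:ℝ) < n := by exact_mod_cast hn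
      have h2 : (0:ℝ) ≤ 2*(j:ℝ) := by positivity
      linarith
    have hvpos : (0:ℝ) < (RealWelch.v k : ℝ) := by exact_mod_cast RealWelch.v_pos k
    have hmpos : (0:ℝ) < (m : ℝ) := by exact_mod_cast hm
    have hprod : ∏ j ∈ Finset.range k, (2*(j:ℝ)+1)/((n:ℝ)+2*j)
        = (RealWelch.v k : ℝ) / D := by
      rw [hD, Finset.prod_div_distrib]
      congr 1
      rw [RealWelch.v_eq]
      push_cast
      exact Finset.prod_congr rfl fun j _ => by ring
    rw [ge_iff_le, hprod, div_le_iff₀ hDpos]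
    have key : (m:ℝ)^2 * (RealWelch.v k : ℝ) ≤ S * D := by nlinarith [CS', hvpos]
    calc (RealWelch.v k : ℝ) = (1/(m:ℝ)^2) * ((m:ℝ)^2 * (RealWelch.v k : ℝ)) := by field_simp
      _ ≤ (1/(m:ℝ)^2) * (S * D) := by
          apply mul_le_mul_of_nonneg_left key (by positivity)
      _ = 1/(m:ℝ)^2 * S * D := by ring
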